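/- Let B be the 3×3 real symmetric matrix with entries b₁₁ = γ₂ m₁ s₂ m₃ + γ₃ m₁ m₂ s₃, b₂₂ = γ₁ s₁ m₂ m₃ + γ₃ m₁ m₂ s₃, b₃₃ = γ₁ s₁ m₂ m₃ + γ₂ m₁ s₂ m₃, b₁₂ = −δ₃ a₁ a₂ m₃, b₁₃ = −δ₂ a₁ m₂ a₃, b₂₃ = −δ₁ m₁ a₂ a₃, where γᵢ = νᵢ²/(ν₁ν₂ν₃), δᵢ = 1/νᵢ with ν₁, ν₂, ν₃ > 0, and mᵢ, sᵢ ≥ 0 with mᵢ sᵢ ≥ aᵢ² for i = 1, 2, 3. Then det(B) ≥ 2 δ₁δ₂δ₃ m₁m₂m₃ (m₁s₁m₂s₂m₃s₃ − (a₁a₂a₃)²) ≥ 0. -/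

import Mathlib

set_option maxHeartbeats 1000000


theorem det_3D_symbol_lower_bound
    (ν1 ν2 ν3 m1 m2 m3 s1 s2 s3 a1 a2 a3 : ℝ)
    (hν1 : 0 < ν1) (hν2 : 0 < ν2) (hν3 : 0 < ν3)
    (hm1 : 0 ≤ m1) (hm2 : 0 ≤ m2) (hm3 : 0 ≤ m3)
    (hs1 : 0 ≤ s1) (hs2 : 0 ≤ s2) (hs3 : 0 ≤ s3)
    (h1 : a1 ^ 2 ≤ m1 * s1) (h2 : a2 ^ 2 ≤ m2 * s2) (h3 : a3 ^ 2 ≤ m3 * s3) :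
    let γ1 := ν1 ^ 2 / (ν1 * ν2 * ν3)
    let γ2 := ν2 ^ 2 / (ν1 * ν2 * ν3)
    let γ3 := ν3 ^ 2 / (ν1 * ν2 * ν3)
    let δ1 := 1 / ν1
    let δ2 := 1 / ν2
    let δ3 := 1 / ν3
    let B : Matrix (Fin 3) (Fin 3) ℝ :=
      !![γ2 * m1 * s2 * m3 + γ3 * m1 * m2 * s3, -(δ3 * a1 * a2 * m3), -(δ2 * a1 * m2 * a3);
         -(δ3 * a1 * a2 * m3), γ1 * s1 * m2 * m3 + γ3 * m1 * m2 * s3, -(δ1 * m1 * a2 * a3);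
         -(δ2 * a1 * m2 * a3), -(δ1 * m1 * a2 * a3), γ1 * s1 * m2 * m3 + γ2 * m1 * s2 * m3]
    2 * δ1 * δ2 * δ3 * m1 * m2 * m3 * (m1 * s1 * m2 * s2 * m3 * s3 - (a1 * a2 * a3) ^ 2)
        ≤ B.det
      ∧ 0 ≤ 2 * δ1 * δ2 * δ3 * m1 * m2 * m3 *
          (m1 * s1 * m2 * s2 * m3 * s3 - (a1 * a2 * a3) ^ 2) := by
  intro γ1 γ2 γ3 δ1 δ2 δ3 B
  have hb12 : 0 ≤ m1 * m2 * s1 * s2 - a1 ^ 2 * a2 ^ 2 := by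
    nlinarith [sq_nonneg a1, sq_nonneg a2]
  have hb13 : 0 ≤ m1 * m3 * s1 * s3 - a1 ^ 2 * a3 ^ 2 := by
    nlinarith [sq_nonneg a1, sq_nonneg a3]
  have hb23 : 0 ≤ m2 * m3 * s2 * s3 - a2 ^ 2 * a3 ^ 2 := by
    nlinarith [sq_nonneg a2, sq_nonneg a3]
  have hTA : 0 ≤ m1 * s1 * m2 * s2 * m3 * s3 - (a1 * a2 * a3) ^ 2 := by
    nlinarith [sq_nonneg a3, mul_nonneg hm3 hs3, mul_nonneg hm1 hs1,
      mul_nonneg (mul_nonneg hm1 hs1) (mul_nonneg hm2 hs2)]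
  have hn1 := hν1.le
  have hn2 := hν2.le
  have hn3 := hν3.le
  set E : ℝ :=
      ν2^2*ν3^4*m1^3*m2*s3*(m2*m3*s2*s3 - a2^2*a3^2)
    + ν2^4*ν3^2*m1^3*m3*s2*(m2*m3*s2*s3 - a2^2*a3^2)
    + ν1^2*ν3^4*m1*m2^3*s3*(m1*m3*s1*s3 - a1^2*a3^2)
    + ν1^4*ν3^2*m2^3*m3*s1*(m1*m3*s1*s3 - a1^2*a3^2)
    + ν1^2*ν2^4*m1*m3^3*s2*(m1*m2*s1*s2 - a1^2*a2^2)
    + ν1^4*ν2^2*m2*m3^3*s1*(m1*m2*s1*s2 - a1^2*a2^2) with hEdef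
  have hE : 0 ≤ E := by
    have t1 : 0 ≤ ν2^2*ν3^4*m1^3*m2*s3*(m2*m3*s2*s3 - a2^2*a3^2) :=
      mul_nonneg (by positivity) hb23
    have t2 : 0 ≤ ν2^4*ν3^2*m1^3*m3*s2*(m2*m3*s2*s3 - a2^2*a3^2) :=
      mul_nonneg (by positivity) hb23
    have t3 : 0 ≤ ν1^2*ν3^4*m1*m2^3*s3*(m1*m3*s1*s3 - a1^2*a3^2) :=
      mul_nonneg (by positivity) hb13
    have t4 : 0 ≤ ν1^4*ν3^2*m2^3*m3*s1*(m1*m3*s1*s3 - a1^2*a3^2) :=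
      mul_nonneg (by positivity) hb13
    have t5 : 0 ≤ ν1^2*ν2^4*m1*m3^3*s2*(m1*m2*s1*s2 - a1^2*a2^2) :=
      mul_nonneg (by positivity) hb12
    have t6 : 0 ≤ ν1^4*ν2^2*m2*m3^3*s1*(m1*m2*s1*s2 - a1^2*a2^2) :=
      mul_nonneg (by positivity) hb12
    rw [hEdef]; linarith
  have hdet : B.det =
      2 * δ1 * δ2 * δ3 * m1 * m2 * m3 *
        (m1 * s1 * m2 * s2 * m3 * s3 - (a1 * a2 * a3) ^ 2)
      + (1 / (ν1 * ν2 * ν3))^3 * E := by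
    simp only [Matrix.det_fin_three, B, γ1, γ2, γ3, δ1, δ2, δ3, hEdef,
      Matrix.cons_val', Matrix.cons_val_zero, Matrix.cons_val_one, Matrix.head_cons,
      Matrix.empty_val', Matrix.cons_val_fin_one, Matrix.head_fin_const,
      Matrix.of_apply, Matrix.cons_val, Matrix.cons_val_two, Matrix.tail_cons]
    field_simp
    ring
  have hc : 0 ≤ (1 / (ν1 * ν2 * ν3))^3 * E := mul_nonneg (by positivity) hE
  constructor
  · linarith [hdet, hc]
  · have hδ : 0 ≤ 2 * δ1 * δ2 * δ3 * m1 * m2 * m3 := by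
      simp only [δ1, δ2, δ3]; positivity
    exact mul_nonneg hδ hTA
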